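/- Let γ be a 2×2 real symmetric positive definite matrix with determinant 1. Writing its complex components as γ_{z̄z̄} = (γ₁₁ - γ₂₂ + 2iγ₁₂)/4 and γ_{zz̄} = (γ₁₁ + γ₂₂)/4, the Beltrami coefficient μ = γ_{z̄z̄}/(1/2 + γ_{zz̄}) satisfies |μ| < 1. -/

import Mathlib

/-- For a 2×2 real symmetric positive definite matrix γ with det γ = 1,
the Beltrami coefficient μ = γ_{z̄z̄}/(1/2 + γ_{zz̄}) satisfies |μ| < 1, where
γ_{z̄z̄} = (γ₁₁ - γ₂₂ + 2iγ₁₂)/4 and γ_{zz̄} = (γ₁₁ + γ₂₂)/4. -/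
theorem stmt0 (γ : Matrix (Fin 2) (Fin 2) ℝ) (hsym : γ.IsSymm)
    (hpos : γ.PosDef) (hdet : γ.det = 1) :
    ‖(((γ 0 0 - γ 1 1 : ℝ) : ℂ) + 2 * (γ 0 1 : ℝ) * Complex.I) / 4 /
      (1 / 2 + ((γ 0 0 + γ 1 1 : ℝ) : ℂ) / 4)‖ < 1 := by
  have hb : γ 1 0 = γ 0 1 := by
    have := congrFun (congrFun hsym 0) 1
    simpa [Matrix.transpose_apply] using this
  have hdet2 : γ 0 0 * γ 1 1 - γ 0 1 * γ 1 0 = 1 := by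
    rw [← Matrix.det_fin_two]; exact hdet
  have ha : 0 < γ 0 0 := by
    have := hpos.dotProduct_mulVec_pos (x := Pi.single 0 1) (by
      intro h
      have := congrFun h 0
      simp [Pi.single_apply] at this)
    simpa [Matrix.mulVec, dotProduct, Fin.sum_univ_two,
      Pi.single_apply] using this
  have hd : 0 < γ 1 1 := by
    have := hpos.dotProduct_mulVec_pos (x := Pi.single 1 1) (by
      intro h
      have := congrFun h 1
      simp [Pi.single_apply] at this)
    simpa [Matrix.mulVec, dotProduct, Fin.sum_univ_two,
      Pi.single_apply] using this
  set a := γ 0 0 with hA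
  set d := γ 1 1 with hD
  set b := γ 0 1 with hB
  have hden : (0:ℝ) < (2 + a + d) / 4 := by linarith
  have e1 : (1 / 2 + ((a + d : ℝ) : ℂ) / 4) = (((2 + a + d) / 4 : ℝ) : ℂ) := by
    push_cast; ring
  have e2 : (((a - d : ℝ) : ℂ) + 2 * (b : ℝ) * Complex.I) / 4
      = (((a - d) / 4 : ℝ) : ℂ) + ((2 * b / 4 : ℝ) : ℂ) * Complex.I := by
    push_cast; ring
  rw [e1, e2, norm_div, Complex.norm_add_mul_I, Complex.norm_of_nonneg hden.le,
    div_lt_one hden]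
  have h4 : Real.sqrt (((a - d) / 4) ^ 2 + (2 * b / 4) ^ 2) < (2 + a + d) / 4 := by
    rw [Real.sqrt_lt' hden]
    rw [hb] at hdet2
    nlinarith [sq_nonneg (a + d), sq_nonneg b]
  exact h4
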